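/- Let E be a complex vector space, let F, G : ℕ → E be finitely supported families of vectors, and let H ∈ E. Consider ψ' = Σ_{m ≥ 1} (x^m ⊗ F(m) + y^m ⊗ G(m)) + 1 ⊗ H in ℂ[x,y] ⊗ E. If ψ' has zero probability of a photon in the |−⟩ mode, then ψ' = (x + y) ⊗ F(1) + 1 ⊗ H; i.e., ψ' is a superposition of a single photon in the |+⟩ mode (tensored with the single auxiliary vector F(1)) and vacuum (tensored with H). -/
import Mathlib


open MvPolynomial TensorProduct

/-- The `E`-coefficient of the monomial `X 0 ^ j * X 1 ^ k` of an element of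
`ℂ[X 0, X 1] ⊗[ℂ] E`. -/
noncomputable def Ecoeff (E : Type*) [AddCommGroup E] [Module ℂ E] (j k : ℕ) :
    MvPolynomial (Fin 2) ℂ ⊗[ℂ] E →ₗ[ℂ] E :=
  TensorProduct.lift
    ((LinearMap.lsmul ℂ E).comp
      (MvPolynomial.lcoeff ℂ (Finsupp.single 0 j + Finsupp.single 1 k)))

/-- The Hadamard mode change: the `ℂ`-algebra substitution `x ↦ (u − v)/√2`,
`y ↦ (u + v)/√2`, where `x = X 0`, `y = X 1` in the source and `u = X 0`,
`v = X 1` in the target. -/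
noncomputable def hadamard : MvPolynomial (Fin 2) ℂ →ₐ[ℂ] MvPolynomial (Fin 2) ℂ :=
  MvPolynomial.aeval
    ![((Real.sqrt 2 : ℂ))⁻¹ • ((X 0 : MvPolynomial (Fin 2) ℂ) - X 1),
      ((Real.sqrt 2 : ℂ))⁻¹ • ((X 0 : MvPolynomial (Fin 2) ℂ) + X 1)]

/-- `ψ` has zero probability of a photon in the `|−⟩` mode: for every `(j,k)`
with `k ≥ 1`, the `E`-coefficient of `u^j v^k` in `(h ⊗ id) ψ` is zero. -/
def NoMinusPhoton {E : Type*} [AddCommGroup E] [Module ℂ E]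
    (ψ : MvPolynomial (Fin 2) ℂ ⊗[ℂ] E) : Prop :=
  ∀ j k : ℕ, 1 ≤ k → Ecoeff E j k (LinearMap.rTensor E hadamard.toLinearMap ψ) = 0

lemma single_sum_eq (i j k l : ℕ) :
    (Finsupp.single (0:Fin 2) i + Finsupp.single 1 j = Finsupp.single 0 k + Finsupp.single 1 l)
    ↔ (i = k ∧ j = l) := by
  constructor
  · intro h
    have h0 := DFunLike.congr_fun h 0
    have h1 := DFunLike.congr_fun h 1
    simp [Finsupp.single_apply] at h0 h1
    exact ⟨h0, h1⟩
  · rintro ⟨rfl, rfl⟩; rfl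

lemma coeff_add_pow' (c : ℂ) (m j k : ℕ) :
    MvPolynomial.coeff (Finsupp.single 0 j + Finsupp.single 1 k)
      ((X 0 + C c * X 1 : MvPolynomial (Fin 2) ℂ) ^ m)
    = if j + k = m then (m.choose k : ℂ) * c ^ k else 0 := by
  rw [add_pow, MvPolynomial.coeff_sum]
  have hterm : ∀ i ∈ Finset.range (m+1),
      MvPolynomial.coeff (Finsupp.single 0 j + Finsupp.single 1 k)
        ((X 0:MvPolynomial (Fin 2) ℂ) ^ i * (C c * X 1) ^ (m - i) * (m.choose i : MvPolynomial (Fin 2) ℂ))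
      = if (i = j ∧ m - i = k) then c ^ (m-i) * (m.choose i : ℂ) else 0 := by
    intro i _
    have hmono : (X 0:MvPolynomial (Fin 2) ℂ) ^ i * (C c * X 1) ^ (m - i) * (m.choose i : MvPolynomial (Fin 2) ℂ)
        = monomial (Finsupp.single 0 i + Finsupp.single 1 (m-i)) (c ^ (m-i) * (m.choose i : ℂ)) := by
      rw [mul_pow, ← C_pow, X_pow_eq_monomial, X_pow_eq_monomial,
        show ((m.choose i : ℕ) : MvPolynomial (Fin 2) ℂ) = C ((m.choose i : ℕ) : ℂ) from (map_natCast C _).symm,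
        C_mul_monomial, monomial_mul]
      rw [mul_comm, C_mul_monomial, mul_comm]
      ring_nf
    rw [hmono, coeff_monomial]
    simp only [single_sum_eq]
  rw [Finset.sum_congr rfl hterm]
  by_cases h : j + k = m
  · rw [if_pos h]
    rw [Finset.sum_eq_single j]
    · have h1 : m - j = k := by omega
      have h2 : m.choose j = m.choose k := by
        rw [show j = m - k by omega, Nat.choose_symm (by omega)]
      rw [if_pos ⟨rfl, h1⟩, h1, h2, mul_comm]
    · intro i _ hne
      rw [if_neg]
      rintro ⟨rfl, -⟩; exact hne rfl
    · intro h'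
      exact absurd (Finset.mem_range.2 (by omega)) h'
  · rw [if_neg h, Finset.sum_eq_zero]
    intro i hi
    rw [if_neg]
    rintro ⟨rfl, rfl⟩
    exact h (by rw [Finset.mem_range] at hi; omega)

lemma coeff_had_X0 (j k m : ℕ) :
    MvPolynomial.coeff (Finsupp.single 0 j + Finsupp.single 1 k) (hadamard ((X 0 : MvPolynomial (Fin 2) ℂ) ^ m))
    = if j + k = m then ((Real.sqrt 2:ℂ))⁻¹ ^ m * ((m.choose k : ℂ) * (-1) ^ k) else 0 := by
  rw [map_pow]
  have h0 : hadamard (X 0 : MvPolynomial (Fin 2) ℂ)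
      = ((Real.sqrt 2 : ℂ))⁻¹ • ((X 0 : MvPolynomial (Fin 2) ℂ) + C (-1) * X 1) := by
    rw [hadamard, aeval_X]
    simp [smul_sub, smul_add, sub_eq_add_neg]
  rw [h0, smul_pow, coeff_smul, coeff_add_pow', smul_eq_mul]
  split <;> simp

lemma coeff_had_X1 (j k m : ℕ) :
    MvPolynomial.coeff (Finsupp.single 0 j + Finsupp.single 1 k) (hadamard ((X 1 : MvPolynomial (Fin 2) ℂ) ^ m))
    = if j + k = m then ((Real.sqrt 2:ℂ))⁻¹ ^ m * (m.choose k : ℂ) else 0 := by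
  rw [map_pow]
  have h0 : hadamard (X 1 : MvPolynomial (Fin 2) ℂ)
      = ((Real.sqrt 2 : ℂ))⁻¹ • ((X 0 : MvPolynomial (Fin 2) ℂ) + C 1 * X 1) := by
    rw [hadamard, aeval_X]
    simp [smul_sub, smul_add, sub_eq_add_neg]
  rw [h0, smul_pow, coeff_smul, coeff_add_pow', smul_eq_mul]
  split <;> simp

lemma finsum_Ici_eq_sum {E : Type*} [AddCommGroup E] [Module ℂ E]
    (F : ℕ → E) (hF : (Function.support F).Finite) (p : ℕ → MvPolynomial (Fin 2) ℂ) :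
    ∑ᶠ m ∈ Set.Ici 1, (p m) ⊗ₜ[ℂ] F m
      = ∑ m ∈ (hF.toFinset.filter (1 ≤ ·)), (p m) ⊗ₜ[ℂ] F m := by
  apply finsum_mem_eq_sum_of_inter_support_eq
  ext x
  simp only [Set.mem_inter_iff, Set.mem_Ici, Function.mem_support, Finset.coe_filter,
    Set.mem_setOf_eq, Set.Finite.mem_toFinset]
  constructor
  · rintro ⟨h1, h2⟩
    refine ⟨⟨fun hFx => h2 ?_, h1⟩, h2⟩
    rw [hFx, TensorProduct.tmul_zero]
  · rintro ⟨⟨-, h1⟩, h2⟩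
    exact ⟨h1, h2⟩

lemma Ecoeff_rT {E : Type*} [AddCommGroup E] [Module ℂ E] (j k : ℕ)
    (p : MvPolynomial (Fin 2) ℂ) (e : E) :
    Ecoeff E j k (LinearMap.rTensor E hadamard.toLinearMap (p ⊗ₜ[ℂ] e))
      = MvPolynomial.coeff (Finsupp.single 0 j + Finsupp.single 1 k) (hadamard p) • e := by
  simp [Ecoeff, LinearMap.rTensor_tmul, MvPolynomial.lcoeff]

/-- If `ψ' = Σ_{m ≥ 1} (x^m ⊗ F m + y^m ⊗ G m) + 1 ⊗ H` has zero probability of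
a photon in the `|−⟩` mode, then `ψ' = (x + y) ⊗ F 1 + 1 ⊗ H`: a superposition of
a single photon in the `|+⟩` mode (with auxiliary vector `F 1`) and vacuum. -/
theorem stmt4 {E : Type*} [AddCommGroup E] [Module ℂ E]
    (F G : ℕ → E) (hF : (Function.support F).Finite) (hG : (Function.support G).Finite)
    (H : E) (ψ : MvPolynomial (Fin 2) ℂ ⊗[ℂ] E)
    (hψ : ψ = (∑ᶠ m ∈ Set.Ici 1, ((X 0 : MvPolynomial (Fin 2) ℂ) ^ m) ⊗ₜ[ℂ] F m)
        + (∑ᶠ m ∈ Set.Ici 1, ((X 1 : MvPolynomial (Fin 2) ℂ) ^ m) ⊗ₜ[ℂ] G m)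
        + (1 : MvPolynomial (Fin 2) ℂ) ⊗ₜ[ℂ] H)
    (hzero : NoMinusPhoton ψ) :
    ψ = ((X 0 + X 1 : MvPolynomial (Fin 2) ℂ)) ⊗ₜ[ℂ] F 1
      + (1 : MvPolynomial (Fin 2) ℂ) ⊗ₜ[ℂ] H := by
  have hs : ((Real.sqrt 2 : ℂ))⁻¹ ≠ 0 := by
    simp only [ne_eq, inv_eq_zero, Complex.ofReal_eq_zero]
    positivity
  set tF : Finset ℕ := hF.toFinset.filter (1 ≤ ·) with htF
  set tG : Finset ℕ := hG.toFinset.filter (1 ≤ ·) with htG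
  have hψ' : ψ = (∑ m ∈ tF, ((X 0 : MvPolynomial (Fin 2) ℂ) ^ m) ⊗ₜ[ℂ] F m)
      + (∑ m ∈ tG, ((X 1 : MvPolynomial (Fin 2) ℂ) ^ m) ⊗ₜ[ℂ] G m)
      + (1 : MvPolynomial (Fin 2) ℂ) ⊗ₜ[ℂ] H := by
    rw [hψ, finsum_Ici_eq_sum F hF, finsum_Ici_eq_sum G hG]
  -- the key consequence of hzero
  have key : ∀ j k : ℕ, 1 ≤ k → ((-1 : ℂ) ^ k) • F (j + k) + G (j + k) = 0 := by
    intro j k hk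
    have hz := hzero j k hk
    rw [hψ'] at hz
    simp only [map_add, map_sum, Ecoeff_rT] at hz
    -- coefficient of the vacuum term vanishes
    have hd0 : (Finsupp.single (0 : Fin 2) j + Finsupp.single 1 k) ≠ 0 := by
      intro h
      have := DFunLike.congr_fun h 1
      simp [Finsupp.single_apply] at this
      omega
    rw [show (hadamard (1 : MvPolynomial (Fin 2) ℂ)) = 1 from map_one _] at hz
    rw [MvPolynomial.coeff_one, if_neg (fun h => hd0 h.symm), zero_smul, add_zero] at hz
    have hsumF : ∑ m ∈ tF, MvPolynomial.coeff (Finsupp.single 0 j + Finsupp.single 1 k)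
          (hadamard ((X 0 : MvPolynomial (Fin 2) ℂ) ^ m)) • F m
        = (((Real.sqrt 2:ℂ))⁻¹ ^ (j+k) * ((((j+k).choose k : ℂ)) * (-1) ^ k)) • F (j+k) := by
      rw [Finset.sum_congr rfl (fun m _ => by rw [coeff_had_X0, ite_smul, zero_smul])]
      rw [Finset.sum_ite_eq]
      by_cases hmem : j + k ∈ tF
      · rw [if_pos hmem]
      · rw [if_neg hmem]
        have hF0 : F (j + k) = 0 := by
          by_contra hne
          exact hmem (by simp [htF, Set.Finite.mem_toFinset, Function.mem_support, hne]; omega)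
        rw [hF0, smul_zero]
    have hsumG : ∑ m ∈ tG, MvPolynomial.coeff (Finsupp.single 0 j + Finsupp.single 1 k)
          (hadamard ((X 1 : MvPolynomial (Fin 2) ℂ) ^ m)) • G m
        = (((Real.sqrt 2:ℂ))⁻¹ ^ (j+k) * (((j+k).choose k : ℂ))) • G (j+k) := by
      rw [Finset.sum_congr rfl (fun m _ => by rw [coeff_had_X1, ite_smul, zero_smul])]
      rw [Finset.sum_ite_eq]
      by_cases hmem : j + k ∈ tG
      · rw [if_pos hmem]
      · rw [if_neg hmem]
        have hG0 : G (j + k) = 0 := by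
          by_contra hne
          exact hmem (by simp [htG, Set.Finite.mem_toFinset, Function.mem_support, hne]; omega)
        rw [hG0, smul_zero]
    rw [hsumF, hsumG] at hz
    have hfac : (((Real.sqrt 2:ℂ))⁻¹ ^ (j+k) * ((((j+k).choose k : ℂ)) * (-1) ^ k)) • F (j+k)
        + (((Real.sqrt 2:ℂ))⁻¹ ^ (j+k) * (((j+k).choose k : ℂ))) • G (j+k)
        = (((Real.sqrt 2:ℂ))⁻¹ ^ (j+k) * (((j+k).choose k : ℂ))) •
            (((-1 : ℂ) ^ k) • F (j + k) + G (j + k)) := by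
      rw [smul_add, smul_smul]
      ring_nf
    rw [hfac] at hz
    rcases smul_eq_zero.mp hz with h | h
    · exfalso
      rcases mul_eq_zero.mp h with h' | h'
      · exact hs (pow_eq_zero_iff (by omega) |>.mp h')
      · have : (j+k).choose k ≠ 0 := Nat.choose_pos (by omega) |>.ne'
        exact this (by exact_mod_cast h')
    · exact h
  -- consequences
  have hG1 : G 1 = F 1 := by
    have h := key 0 1 le_rfl
    rw [pow_one, neg_smul, one_smul, neg_add_eq_zero] at h
    exact h.symm
  have hFG0 : ∀ m, 2 ≤ m → F m = 0 ∧ G m = 0 := by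
    intro m hm
    have h1 := key (m - 1) 1 le_rfl
    have h2 := key (m - 2) 2 (by omega)
    rw [show m - 1 + 1 = m from by omega] at h1
    rw [show m - 2 + 2 = m from by omega] at h2
    rw [pow_one, neg_smul, one_smul, neg_add_eq_zero] at h1
    rw [show ((-1 : ℂ)) ^ 2 = 1 from by norm_num, one_smul] at h2
    rw [← h1] at h2
    have hF0 : F m = 0 := by
      have : (2 : ℂ) • F m = 0 := by rw [two_smul]; exact h2
      rcases smul_eq_zero.mp this with h | h
      · exact absurd h two_ne_zero
      · exact h
    exact ⟨hF0, by rw [← h1, hF0]⟩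
  -- final computation
  have hsF : ∑ m ∈ tF, ((X 0 : MvPolynomial (Fin 2) ℂ) ^ m) ⊗ₜ[ℂ] F m
      = (X 0 : MvPolynomial (Fin 2) ℂ) ⊗ₜ[ℂ] F 1 := by
    rw [Finset.sum_eq_single 1]
    · rw [pow_one]
    · intro m hmem hne
      have : F m = 0 := by
        have h1 : 1 ≤ m := (Finset.mem_filter.mp hmem).2
        exact (hFG0 m (by omega)).1
      rw [this, TensorProduct.tmul_zero]
    · intro h
      have : F 1 = 0 := by
        by_contra hne
        exact h (by simp [htF, Set.Finite.mem_toFinset, Function.mem_support, hne])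
      rw [this, TensorProduct.tmul_zero]
  have hsG : ∑ m ∈ tG, ((X 1 : MvPolynomial (Fin 2) ℂ) ^ m) ⊗ₜ[ℂ] G m
      = (X 1 : MvPolynomial (Fin 2) ℂ) ⊗ₜ[ℂ] F 1 := by
    rw [Finset.sum_eq_single 1]
    · rw [pow_one, hG1]
    · intro m hmem hne
      have : G m = 0 := by
        have h1 : 1 ≤ m := (Finset.mem_filter.mp hmem).2
        exact (hFG0 m (by omega)).2
      rw [this, TensorProduct.tmul_zero]
    · intro h
      have : G 1 = 0 := by
        by_contra hne
        exact h (by simp [htG, Set.Finite.mem_toFinset, Function.mem_support, hne])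
      rw [hG1] at this
      rw [hG1, this, TensorProduct.tmul_zero]
  rw [hψ', hsF, hsG, TensorProduct.add_tmul]
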